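/- For integers q ≥ 4, k ≥ 1 and 2 ≤ h ≤ q − 2, the polyphenylene chain L_{q,h,k} satisfies ABC(L_{q,h,k}) = 2(k−1)/3 + qk/√2. -/
import Mathlib


open Finset

/-- The atom-bond connectivity index `ABC(G)`. -/
noncomputable def abcIndex {V : Type*} [Fintype V] (G : SimpleGraph V) : ℝ := by
  classical
  exact ∑ e ∈ G.edgeFinset,
    Sym2.lift ⟨fun u v =>
      Real.sqrt (((G.degree u : ℝ) + (G.degree v : ℝ) - 2) /
        ((G.degree u : ℝ) * (G.degree v : ℝ))),
      fun u v => congrArg Real.sqrt (by ring)⟩ e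

/-- `nClose G u v` is the number of vertices reachable from `u` that are strictly
closer to `u` than to `v`. -/
noncomputable def nClose {V : Type*} (G : SimpleGraph V) (u v : V) : ℕ :=
  Nat.card {w : V | G.Reachable u w ∧ G.dist w u < G.dist w v}

/-- The Graovac–Ghorbani index `ABC_GG(G)`. -/
noncomputable def abcggIndex {V : Type*} [Fintype V] (G : SimpleGraph V) : ℝ := by
  classical
  exact ∑ e ∈ G.edgeFinset,
    Sym2.lift ⟨fun u v =>
      Real.sqrt (((nClose G u v : ℝ) + (nClose G v u : ℝ) - 2) /
        ((nClose G u v : ℝ) * (nClose G v u : ℝ))),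
      fun u v => congrArg Real.sqrt (by ring)⟩ e

/-- The degree of a vertex, as a real number. -/
noncomputable def degR {V : Type*} [Fintype V] (G : SimpleGraph V) (v : V) : ℝ := by
  classical
  exact (G.degree v : ℝ)

/-- The polyphenylene chain `L_{q,h,k}`: the link of `k` cycles `C_q`, the two contact
vertices in the same cycle being `h` steps apart. -/
def polyGraph (q h k : ℕ) : SimpleGraph (Fin k × Fin q) :=
  SimpleGraph.fromRel (fun p r =>
    (p.1 = r.1 ∧ r.2.1 = (p.2.1 + 1) % q) ∨
    (p.2.1 = h ∧ r.2.1 = 0 ∧ r.1.1 = p.1.1 + 1))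

lemma aux1 {q a : ℕ} (hq : 2 ≤ q) (ha : a < q) : (a+1) % q ≠ a := by
  intro hc
  rcases Nat.lt_or_ge (a+1) q with hlt|hge
  · rw [Nat.mod_eq_of_lt hlt] at hc; omega
  · have h1 : a + 1 = q := by omega
    rw [h1, Nat.mod_self] at hc; omega

lemma aux2 {q a : ℕ} (hq : 3 ≤ q) (ha : a < q) : (a+2) % q ≠ a := by
  intro hc
  rcases Nat.lt_or_ge (a+2) q with hlt|hge
  · rw [Nat.mod_eq_of_lt hlt] at hc; omega
  · have h2 : (a+2) % q = a + 2 - q := by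
      rw [Nat.mod_eq_sub_mod hge, Nat.mod_eq_of_lt (by omega)]
    omega

lemma aux3 {q : ℕ} (hq : 4 ≤ q) (a : ℕ) : (a+1) % q ≠ (a+(q-1)) % q := by
  intro hc
  have h2 : q ∣ (a + (q-1)) - (a+1) := (Nat.modEq_iff_dvd' (by omega)).1 hc
  have h3 : (a + (q-1)) - (a+1) = q - 2 := by omega
  rw [h3] at h2
  exact absurd (Nat.le_of_dvd (by omega) h2) (by omega)

lemma aux4 {q b a : ℕ} (hq : 2 ≤ q) (hb : b < q) (hab : (b+1) % q = a) :
    (a + (q-1)) % q = b := by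
  rw [← hab, Nat.mod_add_mod]
  have h1 : b + 1 + (q-1) = b + q := by omega
  rw [h1, Nat.add_mod_right, Nat.mod_eq_of_lt hb]

lemma aux5 {q a : ℕ} (hq : 2 ≤ q) (ha : a < q) : ((a + (q-1)) % q + 1) % q = a := by
  rw [Nat.mod_add_mod]
  have h1 : a + (q-1) + 1 = a + q := by omega
  rw [h1, Nat.add_mod_right, Nat.mod_eq_of_lt ha]

lemma adj_iff {q h k : ℕ} (hq : 2 ≤ q) {v w : Fin k × Fin q} :
    (polyGraph q h k).Adj v w ↔
      ((v.1 = w.1 ∧ w.2.1 = (v.2.1+1)%q) ∨ (v.2.1 = h ∧ w.2.1 = 0 ∧ w.1.1 = v.1.1+1)) ∨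
      ((w.1 = v.1 ∧ v.2.1 = (w.2.1+1)%q) ∨ (w.2.1 = h ∧ v.2.1 = 0 ∧ v.1.1 = w.1.1+1)) := by
  simp only [polyGraph, SimpleGraph.fromRel_adj]
  constructor
  · rintro ⟨-, hr⟩; exact hr
  · intro hrel
    refine ⟨?_, hrel⟩
    rintro rfl
    rcases hrel with (⟨-, h2⟩|⟨-,-,h3⟩)|(⟨-,h2⟩|⟨-,-,h3⟩)
    · exact aux1 hq v.2.isLt h2.symm
    · omega
    · exact aux1 hq v.2.isLt h2.symm
    · omega

lemma degree_eq {q h k : ℕ} (hq : 4 ≤ q) (hh1 : 2 ≤ h) (hh2 : h ≤ q - 2)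
    (v : Fin k × Fin q) (inst : Fintype ((polyGraph q h k).neighborSet v)) :
    @SimpleGraph.degree _ (polyGraph q h k) v inst =
      if (v.2.1 = h ∧ v.1.1 + 1 < k) ∨ (v.2.1 = 0 ∧ 0 < v.1.1) then 3 else 2 := by
  classical
  obtain ⟨i, a⟩ := v
  have hiLt := i.isLt
  have haLt := a.isLt
  have hdeg : @SimpleGraph.degree _ (polyGraph q h k) (i,a) inst
      = (@SimpleGraph.neighborFinset _ (polyGraph q h k) (i,a) inst).card := rfl
  rw [hdeg]
  set n1 : Fin k × Fin q := (i, ⟨(a.1+1)%q, Nat.mod_lt _ (by omega)⟩) with hn1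
  set n2 : Fin k × Fin q := (i, ⟨(a.1+(q-1))%q, Nat.mod_lt _ (by omega)⟩) with hn2
  have h12 : n1 ≠ n2 := by
    intro hc
    have h2 : (a.1+1)%q = (a.1+(q-1))%q := congrArg (fun p => p.2.1) hc
    exact aux3 hq a.1 h2
  have mem_iff : ∀ w : Fin k × Fin q, (polyGraph q h k).Adj (i,a) w ↔
      ((w = n1 ∨ w = n2) ∨ (a.1 = h ∧ w.1.1 = i.1+1 ∧ w.2.1 = 0)
        ∨ (a.1 = 0 ∧ w.1.1 + 1 = i.1 ∧ w.2.1 = h)) := by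
    intro w
    rw [adj_iff (by omega)]
    constructor
    · rintro ((⟨h1,h2⟩|⟨h1,h2,h3⟩)|(⟨h1,h2⟩|⟨h1,h2,h3⟩))
      · left; left
        rw [Prod.ext_iff]; exact ⟨h1.symm, Fin.ext h2⟩
      · right; left; exact ⟨h1, h3, h2⟩
      · left; right
        rw [Prod.ext_iff]; exact ⟨h1, Fin.ext ((aux4 (by omega) w.2.isLt h2.symm).symm)⟩
      · right; right; exact ⟨h2, h3.symm, h1⟩
    · rintro ((rfl|rfl) | ⟨h1,h2,h3⟩ | ⟨h1,h2,h3⟩)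
      · left; left; exact ⟨rfl, rfl⟩
      · right; left; exact ⟨rfl, (aux5 (by omega) haLt).symm⟩
      · left; right; exact ⟨h1, h3, h2⟩
      · right; right; exact ⟨h3, h1, h2.symm⟩
  by_cases hc1 : a.1 = h ∧ i.1 + 1 < k
  · have hk3 : i.1 + 1 < k := hc1.2
    set n3 : Fin k × Fin q := (⟨i.1+1, hk3⟩, ⟨0, by omega⟩) with hn3
    have hset : @SimpleGraph.neighborFinset _ (polyGraph q h k) (i,a) inst
        = {n1, n2, n3} := by
      ext w
      rw [SimpleGraph.mem_neighborFinset, mem_iff]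
      simp only [Finset.mem_insert, Finset.mem_singleton]
      constructor
      · rintro ((rfl|rfl) | ⟨h1,h2,h3⟩ | ⟨h1,h2,h3⟩)
        · exact Or.inl rfl
        · exact Or.inr (Or.inl rfl)
        · refine Or.inr (Or.inr ?_)
          rw [Prod.ext_iff]
          exact ⟨Fin.ext h2, Fin.ext h3⟩
        · omega
      · rintro (rfl|rfl|rfl)
        · exact Or.inl (Or.inl rfl)
        · exact Or.inl (Or.inr rfl)
        · exact Or.inr (Or.inl ⟨hc1.1, rfl, rfl⟩)
    have h13 : n1 ≠ n3 := by
      intro hc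
      have h2 : i.1 = i.1 + 1 := congrArg (fun p => p.1.1) hc
      omega
    have h23 : n2 ≠ n3 := by
      intro hc
      have h2 : i.1 = i.1 + 1 := congrArg (fun p => p.1.1) hc
      omega
    rw [hset, if_pos (Or.inl hc1)]
    rw [Finset.card_insert_of_notMem (by simp [h12, h13]),
      Finset.card_insert_of_notMem (by simp [h23]), Finset.card_singleton]
  · by_cases hc2 : a.1 = 0 ∧ 0 < i.1
    · have hk3 : i.1 - 1 < k := by omega
      set n4 : Fin k × Fin q := (⟨i.1-1, hk3⟩, ⟨h, by omega⟩) with hn4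
      have hset : @SimpleGraph.neighborFinset _ (polyGraph q h k) (i,a) inst
          = {n1, n2, n4} := by
        ext w
        rw [SimpleGraph.mem_neighborFinset, mem_iff]
        simp only [Finset.mem_insert, Finset.mem_singleton]
        constructor
        · rintro ((rfl|rfl) | ⟨h1,h2,h3⟩ | ⟨h1,h2,h3⟩)
          · exact Or.inl rfl
          · exact Or.inr (Or.inl rfl)
          · exact absurd (h1.symm.trans hc2.1) (by omega)
          · refine Or.inr (Or.inr ?_)
            rw [Prod.ext_iff]
            exact ⟨Fin.ext (show w.1.1 = i.1 - 1 by omega), Fin.ext h3⟩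
        · rintro (rfl|rfl|rfl)
          · exact Or.inl (Or.inl rfl)
          · exact Or.inl (Or.inr rfl)
          · exact Or.inr (Or.inr ⟨hc2.1, show i.1 - 1 + 1 = i.1 by omega, rfl⟩)
      have h14 : n1 ≠ n4 := by
        intro hc
        have h2 : i.1 = i.1 - 1 := congrArg (fun p => p.1.1) hc
        omega
      have h24 : n2 ≠ n4 := by
        intro hc
        have h2 : i.1 = i.1 - 1 := congrArg (fun p => p.1.1) hc
        omega
      rw [hset, if_pos (Or.inr hc2)]
      rw [Finset.card_insert_of_notMem (by simp [h12, h14]),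
        Finset.card_insert_of_notMem (by simp [h24]), Finset.card_singleton]
    · have hset : @SimpleGraph.neighborFinset _ (polyGraph q h k) (i,a) inst
          = {n1, n2} := by
        ext w
        rw [SimpleGraph.mem_neighborFinset, mem_iff]
        simp only [Finset.mem_insert, Finset.mem_singleton]
        constructor
        · rintro ((rfl|rfl) | ⟨h1,h2,h3⟩ | ⟨h1,h2,h3⟩)
          · exact Or.inl rfl
          · exact Or.inr rfl
          · exact absurd ⟨h1, by omega⟩ hc1
          · exact absurd ⟨h1, by omega⟩ hc2
        · rintro (rfl|rfl)
          · exact Or.inl (Or.inl rfl)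
          · exact Or.inl (Or.inr rfl)
      rw [hset, if_neg (by tauto)]
      rw [Finset.card_insert_of_notMem (by simp [h12]), Finset.card_singleton]

def nxtV {q k : ℕ} (hq : 0 < q) (v : Fin k × Fin q) : Fin k × Fin q :=
  (v.1, ⟨(v.2.1 + 1) % q, Nat.mod_lt _ hq⟩)

noncomputable def cycE (q k : ℕ) (hq : 0 < q) : Finset (Sym2 (Fin k × Fin q)) :=
  univ.image (fun v => s(v, nxtV hq v))

def brFun (q h k : ℕ) (hq : 0 < q) (hh : h < q) (i : Fin (k-1)) : Sym2 (Fin k × Fin q) :=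
  s((⟨i.1, by have := i.isLt; omega⟩, ⟨h, hh⟩), (⟨i.1+1, by have := i.isLt; omega⟩, ⟨0, hq⟩))

noncomputable def brE (q h k : ℕ) (hq : 0 < q) (hh : h < q) : Finset (Sym2 (Fin k × Fin q)) :=
  univ.image (brFun q h k hq hh)

lemma cyc_inj {q k : ℕ} (hq : 4 ≤ q) (hq0 : 0 < q) {v w : Fin k × Fin q}
    (hvw : s(v, nxtV hq0 v) = s(w, nxtV hq0 w)) : v = w := by
  rw [Sym2.eq_iff] at hvw
  rcases hvw with ⟨h1, -⟩ | ⟨h1, h2⟩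
  · exact h1
  · exfalso
    have e1 : v.2.1 = (w.2.1 + 1) % q := congrArg (fun p => p.2.1) h1
    have e2 : w.2.1 = (v.2.1 + 1) % q := (congrArg (fun p => p.2.1) h2).symm
    rw [e2, Nat.mod_add_mod] at e1
    exact aux2 (by omega) v.2.isLt e1.symm

lemma br_inj {q h k : ℕ} (hq0 : 0 < q) (hh : h < q) (hh1 : 2 ≤ h) {i j : Fin (k-1)}
    (hij : brFun q h k hq0 hh i = brFun q h k hq0 hh j) : i = j := by
  rw [brFun, brFun, Sym2.eq_iff] at hij
  rcases hij with ⟨h1, -⟩ | ⟨h1, -⟩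
  · have := congrArg (fun p => p.1.1) h1
    exact Fin.ext this
  · have := congrArg (fun p => p.2.1) h1
    simp at this
    omega

lemma cyc_br_disj {q h k : ℕ} (hq : 4 ≤ q) (hq0 : 0 < q) (hh : h < q) :
    Disjoint (cycE q k hq0) (brE q h k hq0 hh) := by
  rw [Finset.disjoint_left]
  rintro e he hbe
  rw [cycE, Finset.mem_image] at he
  rw [brE, Finset.mem_image] at hbe
  obtain ⟨v, -, hv⟩ := he
  obtain ⟨i, -, hi⟩ := hbe
  rw [← hv, brFun, Sym2.eq_iff] at hi
  rcases hi with ⟨h1, h2⟩ | ⟨h1, h2⟩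
  · have e1 : i.1 = v.1.1 := congrArg (fun p => p.1.1) h1
    have e2 : i.1 + 1 = v.1.1 := congrArg (fun p => p.1.1) h2
    omega
  · have e1 : i.1 = v.1.1 := congrArg (fun p => p.1.1) h1
    have e2 : i.1 + 1 = v.1.1 := congrArg (fun p => p.1.1) h2
    omega

lemma edge_eq {q h k : ℕ} (hq : 4 ≤ q) (hh1 : 2 ≤ h) (hh2 : h ≤ q - 2)
    (inst : Fintype (polyGraph q h k).edgeSet) :
    @SimpleGraph.edgeFinset _ (polyGraph q h k) inst
      = cycE q k (by omega) ∪ brE q h k (by omega) (by omega) := by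
  apply Finset.Subset.antisymm
  · intro e he
    induction e with
    | h v w =>
      rw [SimpleGraph.mem_edgeFinset, SimpleGraph.mem_edgeSet, adj_iff (by omega)] at he
      rw [Finset.mem_union, cycE, brE, Finset.mem_image, Finset.mem_image]
      rcases he with (⟨h1, h2⟩ | ⟨h1, h2, h3⟩) | (⟨h1, h2⟩ | ⟨h1, h2, h3⟩)
      · refine Or.inl ⟨v, mem_univ v, ?_⟩
        have hw : w = nxtV (by omega) v := by
          rw [Prod.ext_iff]; exact ⟨h1.symm, Fin.ext h2⟩
        rw [hw]
      · have hik : v.1.1 < k - 1 := by have := w.1.isLt; omega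
        refine Or.inr ⟨⟨v.1.1, hik⟩, mem_univ _, ?_⟩
        rw [brFun, Sym2.eq_iff]
        left
        constructor
        · rw [Prod.ext_iff]; exact ⟨Fin.ext rfl, Fin.ext h1.symm⟩
        · rw [Prod.ext_iff]; exact ⟨Fin.ext h3.symm, Fin.ext h2.symm⟩
      · refine Or.inl ⟨w, mem_univ w, ?_⟩
        have hv : v = nxtV (by omega) w := by
          rw [Prod.ext_iff]; exact ⟨h1.symm, Fin.ext h2⟩
        rw [hv, Sym2.eq_swap]
      · have hik : w.1.1 < k - 1 := by have := v.1.isLt; omega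
        refine Or.inr ⟨⟨w.1.1, hik⟩, mem_univ _, ?_⟩
        rw [brFun, Sym2.eq_iff]
        right
        constructor
        · rw [Prod.ext_iff]; exact ⟨Fin.ext rfl, Fin.ext h1.symm⟩
        · rw [Prod.ext_iff]; exact ⟨Fin.ext h3.symm, Fin.ext h2.symm⟩
  · intro e he
    rw [Finset.mem_union, cycE, brE, Finset.mem_image, Finset.mem_image] at he
    rw [SimpleGraph.mem_edgeFinset]
    rcases he with ⟨v, -, hv⟩ | ⟨i, -, hi⟩
    · rw [← hv, SimpleGraph.mem_edgeSet, adj_iff (by omega)]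
      exact Or.inl (Or.inl ⟨rfl, rfl⟩)
    · rw [← hi, brFun, SimpleGraph.mem_edgeSet, adj_iff (by omega)]
      exact Or.inl (Or.inr ⟨rfl, rfl, rfl⟩)

lemma notboth {q h k : ℕ} (hq : 4 ≤ q) (hh1 : 2 ≤ h) (hh2 : h ≤ q - 2) (hq0 : 0 < q)
    (v : Fin k × Fin q) :
    ¬(((v.2.1 = h ∧ v.1.1 + 1 < k) ∨ (v.2.1 = 0 ∧ 0 < v.1.1)) ∧
      (((nxtV hq0 v).2.1 = h ∧ (nxtV hq0 v).1.1 + 1 < k) ∨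
        ((nxtV hq0 v).2.1 = 0 ∧ 0 < (nxtV hq0 v).1.1))) := by
  rintro ⟨hp1 | hp1, hp2 | hp2⟩
  · have e1 : (v.2.1 + 1) % q = h := hp2.1
    rw [hp1.1] at e1
    exact aux1 (by omega) (by omega) e1
  · have e1 : (v.2.1 + 1) % q = 0 := hp2.1
    rw [hp1.1, Nat.mod_eq_of_lt (by omega)] at e1
    omega
  · have e1 : (v.2.1 + 1) % q = h := hp2.1
    rw [hp1.1, Nat.mod_eq_of_lt (by omega)] at e1
    omega
  · have e1 : (v.2.1 + 1) % q = 0 := hp2.1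
    rw [hp1.1, Nat.mod_eq_of_lt (by omega)] at e1
    omega

lemma cyc_term {q h k : ℕ} (hq : 4 ≤ q) (hh1 : 2 ≤ h) (hh2 : h ≤ q - 2) (hq0 : 0 < q)
    (instd : ∀ u : Fin k × Fin q, Fintype ((polyGraph q h k).neighborSet u))
    (v : Fin k × Fin q) :
    Sym2.lift ⟨fun u w =>
      Real.sqrt ((((@SimpleGraph.degree _ (polyGraph q h k) u (instd u)) : ℝ) +
          ((@SimpleGraph.degree _ (polyGraph q h k) w (instd w)) : ℝ) - 2) /
        (((@SimpleGraph.degree _ (polyGraph q h k) u (instd u)) : ℝ) *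
          ((@SimpleGraph.degree _ (polyGraph q h k) w (instd w)) : ℝ))),
      fun u w => congrArg Real.sqrt (by ring)⟩ s(v, nxtV hq0 v)
      = (Real.sqrt 2)⁻¹ := by
  rw [Sym2.lift_mk]
  dsimp only
  rw [degree_eq hq hh1 hh2 v (instd v), degree_eq hq hh1 hh2 (nxtV hq0 v) (instd (nxtV hq0 v))]
  have hnb := notboth hq hh1 hh2 hq0 v
  by_cases h1 : (v.2.1 = h ∧ v.1.1 + 1 < k) ∨ (v.2.1 = 0 ∧ 0 < v.1.1)
  · have h2 : ¬(((nxtV hq0 v).2.1 = h ∧ (nxtV hq0 v).1.1 + 1 < k) ∨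
        ((nxtV hq0 v).2.1 = 0 ∧ 0 < (nxtV hq0 v).1.1)) := fun h2 => hnb ⟨h1, h2⟩
    rw [if_pos h1, if_neg h2]
    rw [show (((3:ℕ):ℝ) + ((2:ℕ):ℝ) - 2) / (((3:ℕ):ℝ) * ((2:ℕ):ℝ)) = 2⁻¹ by push_cast; norm_num,
      Real.sqrt_inv]
  · rw [if_neg h1]
    by_cases h2 : ((nxtV hq0 v).2.1 = h ∧ (nxtV hq0 v).1.1 + 1 < k) ∨
        ((nxtV hq0 v).2.1 = 0 ∧ 0 < (nxtV hq0 v).1.1)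
    · rw [if_pos h2]
      rw [show (((2:ℕ):ℝ) + ((3:ℕ):ℝ) - 2) / (((2:ℕ):ℝ) * ((3:ℕ):ℝ)) = 2⁻¹ by push_cast; norm_num,
        Real.sqrt_inv]
    · rw [if_neg h2]
      rw [show (((2:ℕ):ℝ) + ((2:ℕ):ℝ) - 2) / (((2:ℕ):ℝ) * ((2:ℕ):ℝ)) = 2⁻¹ by push_cast; norm_num,
        Real.sqrt_inv]

lemma br_term {q h k : ℕ} (hq : 4 ≤ q) (hh1 : 2 ≤ h) (hh2 : h ≤ q - 2) (hq0 : 0 < q)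
    (hh : h < q)
    (instd : ∀ u : Fin k × Fin q, Fintype ((polyGraph q h k).neighborSet u))
    (i : Fin (k-1)) :
    Sym2.lift ⟨fun u w =>
      Real.sqrt ((((@SimpleGraph.degree _ (polyGraph q h k) u (instd u)) : ℝ) +
          ((@SimpleGraph.degree _ (polyGraph q h k) w (instd w)) : ℝ) - 2) /
        (((@SimpleGraph.degree _ (polyGraph q h k) u (instd u)) : ℝ) *
          ((@SimpleGraph.degree _ (polyGraph q h k) w (instd w)) : ℝ))),
      fun u w => congrArg Real.sqrt (by ring)⟩ (brFun q h k hq0 hh i)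
      = 2/3 := by
  rw [brFun, Sym2.lift_mk]
  dsimp only
  rw [degree_eq hq hh1 hh2, degree_eq hq hh1 hh2]
  rw [if_pos (Or.inl ⟨rfl, show i.1 + 1 < k by have := i.isLt; omega⟩),
    if_pos (Or.inr ⟨rfl, show 0 < i.1 + 1 by omega⟩)]
  rw [show (((3:ℕ):ℝ) + ((3:ℕ):ℝ) - 2) / (((3:ℕ):ℝ) * ((3:ℕ):ℝ)) = (2/3)^2 by push_cast; norm_num]
  rw [Real.sqrt_sq (by norm_num)]


theorem abc_polyGraph (q h k : ℕ) (hq : 4 ≤ q) (hk : 1 ≤ k) (hh₁ : 2 ≤ h) (hh₂ : h ≤ q - 2) :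
    abcIndex (polyGraph q h k) =
      2 * ((k : ℝ) - 1) / 3 + (q : ℝ) * (k : ℝ) / Real.sqrt 2 := by
  classical
  have hq0 : 0 < q := by omega
  have hhq : h < q := by omega
  unfold abcIndex
  rw [edge_eq hq hh₁ hh₂, Finset.sum_union (cyc_br_disj hq hq0 hhq)]
  rw [cycE, brE]
  rw [Finset.sum_image (fun x _ y _ hxy => cyc_inj hq hq0 hxy),
    Finset.sum_image (fun x _ y _ hxy => br_inj hq0 hhq hh₁ hxy)]
  simp only [cyc_term hq hh₁ hh₂ hq0, br_term hq hh₁ hh₂ hq0 hhq]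
  rw [Finset.sum_const, Finset.sum_const, Finset.card_univ, Finset.card_univ,
    Fintype.card_prod, Fintype.card_fin, Fintype.card_fin, Fintype.card_fin, nsmul_eq_mul, nsmul_eq_mul]
  have hs : Real.sqrt 2 ≠ 0 := by positivity
  rw [Nat.cast_mul, Nat.cast_sub hk]
  push_cast
  field_simp
  ring
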